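/- The Lovász extension of a submodular function f with f(∅) = 0 is convex: for w₁, w₂ ∈ ℝ≥0^E and λ ∈ [0,1], L_f(λ w₁ + (1−λ) w₂) ≤ λ L_f(w₁) + (1−λ) L_f(w₂). -/

import Mathlib

open Finset MeasureTheory

variable {E : Type*} [Fintype E] [DecidableEq E]

open Classical in
noncomputable def lovasz (f : Finset E → ℝ) (w : E → ℝ) : ℝ :=
  ∫ t in Set.Ioi (0 : ℝ), f (Finset.univ.filter (fun e => t ≤ w e))

namespace LovaszAux

variable {E : Type*} [Fintype E] [DecidableEq E]

/-- The greedy vector associated to an ordering `l`. -/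
noncomputable def xvec (f : Finset E → ℝ) (l : List E) (e : E) : ℝ :=
  f (l.take (l.idxOf e + 1)).toFinset - f (l.take (l.idxOf e)).toFinset

lemma sum_xvec_take (f : Finset E → ℝ) (h0 : f ∅ = 0) (l : List E) (hl : l.Nodup) :
    ∀ k, ∑ e ∈ (l.take k).toFinset, xvec f l e = f (l.take k).toFinset := by
  intro k
  induction k with
  | zero => simp [h0]
  | succ k ih =>
    rcases h : l[k]? with _ | a
    · rw [List.take_succ, h]; simpa using ih
    · have hk : k < l.length := by
        by_contra hk
        rw [List.getElem?_eq_none (by omega)] at h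
        simp at h
      have hak : l[k] = a := by
        have := List.getElem?_eq_getElem hk
        rw [h] at this; exact (Option.some.injEq _ _).mp this.symm
      have hidx : l.idxOf a = k := by
        rw [← hak]; exact List.Nodup.idxOf_getElem hl k hk
      have hnotin : a ∉ (l.take k).toFinset := by
        rw [← hak]
        intro hmem
        rw [List.mem_toFinset] at hmem
        have h1 : (l.take (k+1)).Nodup := (List.take_sublist _ _).nodup hl
        rw [List.take_succ, List.getElem?_eq_getElem hk] at h1
        simp only [Option.toList_some, List.nodup_append] at h1
        exact h1.2.2 _ hmem _ (List.mem_singleton_self _) rfl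
      have hts : (l.take (k+1)).toFinset = insert a (l.take k).toFinset := by
        rw [List.take_succ, h]
        ext; simp
      rw [hts, Finset.sum_insert hnotin, ih]
      have : xvec f l a = f (l.take (k+1)).toFinset - f (l.take k).toFinset := by
        rw [xvec, hidx]
      rw [this, hts]
      ring

lemma greedy (f : Finset E → ℝ)
    (hsub : ∀ A B : Finset E, f (A ∪ B) + f (A ∩ B) ≤ f A + f B)
    (h0 : f ∅ = 0) (l : List E) (hl : l.Nodup) :
    ∀ k, ∀ A : Finset E, A ⊆ (l.take k).toFinset → ∑ e ∈ A, xvec f l e ≤ f A := by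
  intro k
  induction k with
  | zero =>
    intro A hA
    have : A = ∅ := Finset.subset_empty.mp (by simpa using hA)
    simp [this, h0]
  | succ k ih =>
    intro A hA
    rcases h : l[k]? with _ | a
    · rw [List.take_succ, h] at hA
      exact ih A (by simpa using hA)
    · have hk : k < l.length := by
        by_contra hk
        rw [List.getElem?_eq_none (by omega)] at h
        simp at h
      have hak : l[k] = a := by
        have := List.getElem?_eq_getElem hk
        rw [h] at this; exact (Option.some.injEq _ _).mp this.symm
      have hidx : l.idxOf a = k := by
        rw [← hak]; exact List.Nodup.idxOf_getElem hl k hk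
      have hnotin : a ∉ (l.take k).toFinset := by
        rw [← hak]
        intro hmem
        rw [List.mem_toFinset] at hmem
        have h1 : (l.take (k+1)).Nodup := (List.take_sublist _ _).nodup hl
        rw [List.take_succ, List.getElem?_eq_getElem hk] at h1
        simp only [Option.toList_some, List.nodup_append] at h1
        exact h1.2.2 _ hmem _ (List.mem_singleton_self _) rfl
      have hts : (l.take (k+1)).toFinset = insert a (l.take k).toFinset := by
        rw [List.take_succ, h]
        ext; simp
      rw [hts] at hA
      by_cases haA : a ∈ A
      · set S := (l.take k).toFinset with hS
        set A' := A.erase a with hA'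
        have hA'S : A' ⊆ S := by
          intro e he
          rcases Finset.mem_erase.mp he with ⟨hne, heA⟩
          rcases Finset.mem_insert.mp (hA heA) with h' | h'
          · exact absurd h' hne
          · exact h'
        have hsum : ∑ e ∈ A, xvec f l e = xvec f l a + ∑ e ∈ A', xvec f l e := by
          rw [hA', ← Finset.add_sum_erase _ _ haA]
        have hIH : ∑ e ∈ A', xvec f l e ≤ f A' := ih A' hA'S
        have hAunion : A ∪ S = insert a S := by
          apply Finset.Subset.antisymm
          · intro e he
            rcases Finset.mem_union.mp he with h' | h'
            · exact hA h'
            · exact Finset.mem_insert_of_mem h'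
          · intro e he
            rcases Finset.mem_insert.mp he with rfl | h'
            · exact Finset.mem_union_left _ haA
            · exact Finset.mem_union_right _ h'
        have hAinter : A ∩ S = A' := by
          ext e
          simp only [Finset.mem_inter, hA', Finset.mem_erase]
          constructor
          · rintro ⟨h1, h2⟩
            refine ⟨?_, h1⟩
            rintro rfl; exact hnotin h2
          · rintro ⟨h1, h2⟩
            exact ⟨h2, hA'S (Finset.mem_erase.mpr ⟨h1, h2⟩)⟩
        have hmod := hsub A S
        rw [hAunion, hAinter] at hmod
        have hx : xvec f l a = f (insert a S) - f S := by
          rw [xvec, hidx, ← hts, hS]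
        rw [hsum, hx]
        linarith
      · have : A ⊆ (l.take k).toFinset := by
          intro e he
          rcases Finset.mem_insert.mp (hA he) with rfl | h'
          · exact absurd he haA
          · exact h'
        exact ih A this

lemma level_prefix (w : E → ℝ) (l : List E) (hmem : ∀ e : E, e ∈ l)
    (hsort : l.Pairwise fun a b => w b ≤ w a) (t : ℝ)
    [inst : DecidablePred fun e => t ≤ w e] :
    Finset.univ.filter (fun e => t ≤ w e)
      = (l.takeWhile (fun e => decide (t ≤ w e))).toFinset := by
  ext e
  simp only [Finset.mem_filter, Finset.mem_univ, true_and, List.mem_toFinset]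
  constructor
  · intro ht
    by_contra hne
    set p : E → Bool := fun e => decide (t ≤ w e) with hp
    have hd : e ∈ l.dropWhile p := by
      have hsplit : l.takeWhile p ++ l.dropWhile p = l := List.takeWhile_append_dropWhile
      have : e ∈ l.takeWhile p ++ l.dropWhile p := by rw [hsplit]; exact hmem e
      rcases List.mem_append.mp this with h' | h'
      · exact absurd h' hne
      · exact h'
    have hdne : l.dropWhile p ≠ [] := List.ne_nil_of_mem hd
    have hdfail : ¬ (t ≤ w ((l.dropWhile p).head hdne)) := by
      have := List.head_dropWhile_not p hdne
      simpa [hp] using this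
    set d := (l.dropWhile p).head hdne with hdd
    have hwle : w e ≤ w d := by
      have hcons : l.dropWhile p = d :: (l.dropWhile p).tail := (List.cons_head_tail hdne).symm
      rw [hcons] at hd
      rcases List.mem_cons.mp hd with rfl | hin
      · exact le_refl _
      · have hpd : (l.dropWhile p).Pairwise (fun a b => w b ≤ w a) :=
          hsort.sublist (List.dropWhile_sublist _)
        rw [hcons] at hpd
        exact (List.pairwise_cons.mp hpd).1 e hin
    exact hdfail (le_trans ht hwle)
  · intro h
    have := List.mem_takeWhile_imp h
    simpa using this

end LovaszAux

theorem lovasz_convex (f : Finset E → ℝ) (w₁ w₂ : E → ℝ) (lam : ℝ)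
    (hsub : ∀ A B : Finset E, f (A ∪ B) + f (A ∩ B) ≤ f A + f B)
    (h0 : f ∅ = 0) (hw₁ : ∀ e, 0 ≤ w₁ e) (hw₂ : ∀ e, 0 ≤ w₂ e)
    (hlam0 : 0 ≤ lam) (hlam1 : lam ≤ 1) :
    lovasz f (fun e => lam * w₁ e + (1 - lam) * w₂ e) ≤
      lam * lovasz f w₁ + (1 - lam) * lovasz f w₂ := by
  classical
  set w : E → ℝ := fun e => lam * w₁ e + (1 - lam) * w₂ e with hw
  have hwpos : ∀ e, 0 ≤ w e := fun e =>
    add_nonneg (mul_nonneg hlam0 (hw₁ e)) (mul_nonneg (by linarith) (hw₂ e))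
  -- the sorted list
  set le : E → E → Bool := fun a b => decide (w b ≤ w a) with hle
  set l : List E := (Finset.univ.toList (α := E)).mergeSort le with hldef
  have hperm : l.Perm Finset.univ.toList := List.mergeSort_perm _ le
  have hlnd : l.Nodup := hperm.nodup_iff.mpr (Finset.nodup_toList _)
  have hlmem : ∀ e : E, e ∈ l := fun e => hperm.mem_iff.mpr (Finset.mem_toList.mpr (Finset.mem_univ e))
  have hsort : l.Pairwise fun a b => w b ≤ w a := by
    have := List.pairwise_mergeSort (le := le)
      (fun a b c hab hbc => by
        simp only [hle, decide_eq_true_eq] at *; exact le_trans hbc hab)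
      (fun a b => by
        simp only [hle, Bool.or_eq_true, decide_eq_true_eq]; exact le_total (w b) (w a))
      (Finset.univ.toList (α := E))
    refine this.imp ?_
    intro a b hab
    simpa [hle] using hab
  have huniv : (l.take l.length).toFinset = (Finset.univ : Finset E) := by
    rw [List.take_length]
    ext e; simp [hlmem e]
  -- LovaszAux.greedy vector
  set x : E → ℝ := LovaszAux.xvec f l with hx
  -- feasibility: for all A, sum of x over A ≤ f A
  have hfeas : ∀ A : Finset E, ∑ e ∈ A, x e ≤ f A := by
    intro A
    exact LovaszAux.greedy f hsub h0 l hlnd l.length A (by rw [huniv]; exact Finset.subset_univ A)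
  -- exactness on level sets of w
  have hexact : ∀ t : ℝ, f (Finset.univ.filter (fun e => t ≤ w e))
      = ∑ e ∈ Finset.univ.filter (fun e => t ≤ w e), x e := by
    intro t
    have hlev := LovaszAux.level_prefix w l hlmem hsort t
    set tw := l.takeWhile (fun e => decide (t ≤ w e)) with htw
    have hpref : tw = l.take tw.length :=
      List.prefix_iff_eq_take.mp (List.takeWhile_prefix _)
    rw [hlev, hpref]
    exact (LovaszAux.sum_xvec_take f h0 l hlnd tw.length).symm
  -- pointwise identity between filtered sums and indicator sums, for t > 0
  have hind : ∀ (u : E → ℝ) (t : ℝ), t ∈ Set.Ioi (0:ℝ) →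
      ∑ e ∈ Finset.univ.filter (fun e => t ≤ u e), x e
        = ∑ e : E, Set.indicator (Set.Ioc 0 (u e)) (fun _ => x e) t := by
    intro u t ht
    rw [Finset.sum_filter]
    refine Finset.sum_congr rfl fun e _ => ?_
    by_cases h : t ≤ u e
    · simp [Set.indicator, Set.mem_Ioc, h, Set.mem_Ioi.mp ht]
    · simp [Set.indicator, Set.mem_Ioc, h]
  -- integrability of indicator sums
  have hind_int : ∀ u : E → ℝ,
      IntegrableOn (fun t => ∑ e : E, Set.indicator (Set.Ioc 0 (u e)) (fun _ => x e) t)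
        (Set.Ioi (0:ℝ)) := by
    intro u
    apply Integrable.integrableOn
    apply integrable_finset_sum
    intro e _
    rw [integrable_indicator_iff measurableSet_Ioc]
    exact (integrableOn_const_iff enorm_ne_top).2 (Or.inr measure_Ioc_lt_top)
  -- integral of indicator sums
  have hind_val : ∀ u : E → ℝ, (∀ e, 0 ≤ u e) →
      (∫ t in Set.Ioi (0:ℝ), ∑ e : E, Set.indicator (Set.Ioc 0 (u e)) (fun _ => x e) t)
        = ∑ e : E, x e * u e := by
    intro u hu
    rw [integral_finset_sum]
    · refine Finset.sum_congr rfl fun e _ => ?_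
      rw [setIntegral_indicator measurableSet_Ioc]
      have : Set.Ioi (0:ℝ) ∩ Set.Ioc 0 (u e) = Set.Ioc 0 (u e) := by
        apply Set.inter_eq_self_of_subset_right
        exact Set.Ioc_subset_Ioi_self
      rw [this, setIntegral_const, Real.volume_real_Ioc, smul_eq_mul,
        max_eq_left (by linarith [hu e]), sub_zero, mul_comm]
    · intro e _
      apply Integrable.integrableOn
      rw [integrable_indicator_iff measurableSet_Ioc]
      exact (integrableOn_const_iff enorm_ne_top).2 (Or.inr measure_Ioc_lt_top)
  -- integrability of the lovasz integrand
  have hg_int : ∀ u : E → ℝ,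
      IntegrableOn (fun t => f (Finset.univ.filter (fun e => t ≤ u e))) (Set.Ioi (0:ℝ)) := by
    intro u
    set F : ℝ → Finset E := fun t => Finset.univ.filter (fun e => t ≤ u e) with hF
    have hFA : ∀ A : Finset E, MeasurableSet {s : ℝ | F s = A} := by
      intro A
      have heq : {s : ℝ | F s = A}
          = (⋂ e ∈ A, Set.Iic (u e)) ∩ (⋂ e ∈ (Finset.univ \ A : Finset E), Set.Ioi (u e)) := by
        ext s
        simp only [Set.mem_setOf_eq, hF, Finset.ext_iff, Finset.mem_filter, Finset.mem_univ,
          true_and, Set.mem_inter_iff, Set.mem_iInter, Set.mem_Iic, Set.mem_Ioi,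
          Finset.mem_sdiff]
        constructor
        · intro h
          exact ⟨fun e he => (h e).mpr he,
            fun e he => not_le.mp (fun hc => he ((h e).mp hc))⟩
        · rintro ⟨h1, h2⟩ e
          constructor
          · intro hs
            by_contra heA
            exact absurd hs (not_le.mpr (h2 e heA))
          · intro heA; exact h1 e heA
      rw [heq]
      exact (MeasurableSet.biInter (Set.to_countable _) fun e _ => measurableSet_Iic).inter
        (MeasurableSet.biInter (Set.to_countable _) fun e _ => measurableSet_Ioi)
    have hrep : ∀ t : ℝ, f (F t)
        = ∑ A : Finset E, Set.indicator {s : ℝ | F s = A} (fun _ => f A) t := by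
      intro t
      rw [Finset.sum_eq_single (F t)]
      · simp [Set.indicator_of_mem, Set.mem_setOf_eq]
      · intro A _ hne
        apply Set.indicator_of_notMem
        simp only [Set.mem_setOf_eq]
        exact fun h => hne h.symm
      · intro h; exact absurd (Finset.mem_univ _) h
    have hsum_int : IntegrableOn
        (fun t => ∑ A : Finset E, Set.indicator {s : ℝ | F s = A} (fun _ => f A) t)
        (Set.Ioi (0:ℝ)) := by
      apply integrable_finset_sum
      intro A _
      rw [integrable_indicator_iff (hFA A)]
      by_cases hA : A = ∅
      · exact (integrableOn_const_iff enorm_ne_top).2 (Or.inl (by rw [hA, h0]; simp))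
      · obtain ⟨e₀, he₀⟩ := Finset.nonempty_iff_ne_empty.mpr hA
        refine (integrableOn_const_iff enorm_ne_top).2 (Or.inr ?_)
        rw [Measure.restrict_apply (hFA A)]
        have hsub' : {s : ℝ | F s = A} ∩ Set.Ioi 0 ⊆ Set.Ioc 0 (u e₀) := by
          rintro s ⟨hs1, hs2⟩
          refine ⟨Set.mem_Ioi.mp hs2, ?_⟩
          have : e₀ ∈ F s := by rw [Set.mem_setOf_eq.mp hs1]; exact he₀
          exact (Finset.mem_filter.mp this).2
        exact lt_of_le_of_lt (measure_mono hsub') measure_Ioc_lt_top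
    have : (fun t => f (F t))
        = fun t => ∑ A : Finset E, Set.indicator {s : ℝ | F s = A} (fun _ => f A) t :=
      funext hrep
    rw [hF] at this
    rw [this]
    exact hsum_int
  -- the exact value of lovasz f w
  have hlw : lovasz f w = ∑ e : E, x e * w e := by
    rw [lovasz]
    rw [setIntegral_congr_fun measurableSet_Ioi
      (g := fun t => ∑ e : E, Set.indicator (Set.Ioc 0 (w e)) (fun _ => x e) t)
      (fun t ht => by rw [hexact t, hind w t ht])]
    exact hind_val w hwpos
  -- the lower bounds for w₁ and w₂
  have hlb : ∀ u : E → ℝ, (∀ e, 0 ≤ u e) → ∑ e : E, x e * u e ≤ lovasz f u := by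
    intro u hu
    rw [lovasz, ← hind_val u hu]
    apply setIntegral_mono_on (hind_int u) (hg_int u) measurableSet_Ioi
    intro t ht
    rw [← hind u t ht]
    exact hfeas _
  have key1 := hlb w₁ hw₁
  have key2 := hlb w₂ hw₂
  have hsplit : ∑ e : E, x e * w e
      = lam * (∑ e : E, x e * w₁ e) + (1 - lam) * (∑ e : E, x e * w₂ e) := by
    rw [Finset.mul_sum, Finset.mul_sum, ← Finset.sum_add_distrib]
    refine Finset.sum_congr rfl fun e _ => ?_
    simp only [hw]; ring
  rw [hlw, hsplit]
  have h1 : lam * (∑ e : E, x e * w₁ e) ≤ lam * lovasz f w₁ :=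
    mul_le_mul_of_nonneg_left key1 hlam0
  have h2 : (1 - lam) * (∑ e : E, x e * w₂ e) ≤ (1 - lam) * lovasz f w₂ :=
    mul_le_mul_of_nonneg_left key2 (by linarith)
  linarith
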